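/- Let (Ω, μ) be a probability space, let ν_g > 2 and ν_v > 2 be real numbers, and let g, g', v, v' : Ω → ℝᵖ be random vectors with all components square-integrable, means m_g = E[g], m_g' = E[g'], m_v = E[v], m_v' = E[v'], and cross-covariances E[(g − m_g)(g' − m_g')ᵀ] = (ν_g/(ν_g − 2)) κ_g and E[(v − m_v)(v' − m_v')ᵀ] = (ν_v/(ν_v − 2)) κ_v for p×p real matrices κ_g, κ_v. Assume g is independent of v', and v is independent of g'. Define ν_e := (ν_g + ν_v)/2 and κ_e := ((ν_e − 2)/ν_e) · ( (ν_g/(ν_g − 2)) κ_g + (ν_v/(ν_v − 2)) κ_v ). Then ν_e > 2, and the random vector e := g + v matches the first two moments of a Student's-t process with parameters (m_g + m_v, κ_e, ν_e): namely E[e] = m_g + m_v and E[(e − E[e])((g' + v') − E[g' + v'])ᵀ] = (ν_e/(ν_e − 2)) κ_e. -/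

import Mathlib

open MeasureTheory Matrix ProbabilityTheory

private lemma int_mul_of_L2 {Ω : Type*} [MeasurableSpace Ω] {μ : Measure Ω}
    {f h : Ω → ℝ} (hf : MemLp f 2 μ) (hh : MemLp h 2 μ) :
    Integrable (fun ω => f ω * h ω) μ := by
  have : MemLp (f • h) 1 μ := MemLp.smul (p := 2) (q := 2) (r := 1) hh hf
  exact memLp_one_iff_integrable.mp this

/-- Proposition 3: moment matching for the sum of two independent Student's-t process
values with `ν_e = (ν_g + ν_v)/2` and
`κ_e = ((ν_e−2)/ν_e)((ν_g/(ν_g−2))κ_g + (ν_v/(ν_v−2))κ_v)`. -/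
theorem stp_sum_moment_matching
    {Ω : Type*} [MeasurableSpace Ω] (μ : Measure Ω) [IsProbabilityMeasure μ]
    {p : ℕ} (νg νv : ℝ) (hνg : 2 < νg) (hνv : 2 < νv)
    (g g' v v' : Ω → Fin p → ℝ)
    (hg : ∀ i, MemLp (fun ω => g ω i) 2 μ)
    (hg' : ∀ i, MemLp (fun ω => g' ω i) 2 μ)
    (hv : ∀ i, MemLp (fun ω => v ω i) 2 μ)
    (hv' : ∀ i, MemLp (fun ω => v' ω i) 2 μ)
    (mg mg' mv mv' : Fin p → ℝ)
    (hmg : ∀ i, mg i = ∫ ω, g ω i ∂μ)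
    (hmg' : ∀ i, mg' i = ∫ ω, g' ω i ∂μ)
    (hmv : ∀ i, mv i = ∫ ω, v ω i ∂μ)
    (hmv' : ∀ i, mv' i = ∫ ω, v' ω i ∂μ)
    (κg κv : Matrix (Fin p) (Fin p) ℝ)
    (hκg : ∀ i j, (∫ ω, (g ω i - mg i) * (g' ω j - mg' j) ∂μ) = (νg / (νg - 2)) • κg i j)
    (hκv : ∀ i j, (∫ ω, (v ω i - mv i) * (v' ω j - mv' j) ∂μ) = (νv / (νv - 2)) • κv i j)
    (hgv' : IndepFun g v' μ)
    (hvg' : IndepFun v g' μ)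
    (νe : ℝ) (hνe : νe = (νg + νv) / 2)
    (κe : Matrix (Fin p) (Fin p) ℝ)
    (hκe : κe = ((νe - 2) / νe) • ((νg / (νg - 2)) • κg + (νv / (νv - 2)) • κv))
    (e e' : Ω → Fin p → ℝ)
    (he : e = fun ω => g ω + v ω)
    (he' : e' = fun ω => g' ω + v' ω) :
    2 < νe ∧
    (∀ i, (∫ ω, e ω i ∂μ) = mg i + mv i) ∧
    (∀ i j, (∫ ω, (e ω i - ∫ ω', e ω' i ∂μ) * (e' ω j - ∫ ω', e' ω' j ∂μ) ∂μ) =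
      ((νe / (νe - 2)) • κe) i j) := by
  have hνe2 : 2 < νe := by rw [hνe]; linarith
  -- integrability of components
  have hIg : ∀ i, Integrable (fun ω => g ω i) μ := fun i => (hg i).integrable one_le_two
  have hIg' : ∀ i, Integrable (fun ω => g' ω i) μ := fun i => (hg' i).integrable one_le_two
  have hIv : ∀ i, Integrable (fun ω => v ω i) μ := fun i => (hv i).integrable one_le_two
  have hIv' : ∀ i, Integrable (fun ω => v' ω i) μ := fun i => (hv' i).integrable one_le_two
  -- centered versions are in L2
  have hcg : ∀ i, MemLp (fun ω => g ω i - mg i) 2 μ := fun i => (hg i).sub (memLp_const _)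
  have hcg' : ∀ j, MemLp (fun ω => g' ω j - mg' j) 2 μ := fun j => (hg' j).sub (memLp_const _)
  have hcv : ∀ i, MemLp (fun ω => v ω i - mv i) 2 μ := fun i => (hv i).sub (memLp_const _)
  have hcv' : ∀ j, MemLp (fun ω => v' ω j - mv' j) 2 μ := fun j => (hv' j).sub (memLp_const _)
  -- centered versions have mean zero
  have hzg : ∀ i, (∫ ω, (g ω i - mg i) ∂μ) = 0 := fun i => by
    rw [integral_sub (hIg i) (integrable_const _), integral_const]
    simp [hmg i]
  have hzg' : ∀ j, (∫ ω, (g' ω j - mg' j) ∂μ) = 0 := fun j => by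
    rw [integral_sub (hIg' j) (integrable_const _), integral_const]
    simp [hmg' j]
  have hzv : ∀ i, (∫ ω, (v ω i - mv i) ∂μ) = 0 := fun i => by
    rw [integral_sub (hIv i) (integrable_const _), integral_const]
    simp [hmv i]
  have hzv' : ∀ j, (∫ ω, (v' ω j - mv' j) ∂μ) = 0 := fun j => by
    rw [integral_sub (hIv' j) (integrable_const _), integral_const]
    simp [hmv' j]
  -- means of e
  have hmeans : ∀ i, (∫ ω, e ω i ∂μ) = mg i + mv i := by
    intro i
    simp only [he, Pi.add_apply]
    rw [integral_add (hIg i) (hIv i), hmg i, hmv i]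
  refine ⟨hνe2, hmeans, ?_⟩
  intro i j
  have hmeans' : ∀ j, (∫ ω, e' ω j ∂μ) = mg' j + mv' j := by
    intro j
    simp only [he', Pi.add_apply]
    rw [integral_add (hIg' j) (hIv' j), hmg' j, hmv' j]
  -- independence of centered components
  have hcross1 : (∫ ω, (g ω i - mg i) * (v' ω j - mv' j) ∂μ) = 0 := by
    have hind : IndepFun (fun ω => g ω i - mg i) (fun ω => v' ω j - mv' j) μ :=
      hgv'.comp ((measurable_pi_apply i).sub measurable_const)
        ((measurable_pi_apply j).sub measurable_const)
    have := hind.integral_mul_eq_mul_integral (hcg i).aestronglyMeasurable (hcv' j).aestronglyMeasurable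
    simpa [Pi.mul_apply, hzg i, hzv' j] using this
  have hcross2 : (∫ ω, (v ω i - mv i) * (g' ω j - mg' j) ∂μ) = 0 := by
    have hind : IndepFun (fun ω => v ω i - mv i) (fun ω => g' ω j - mg' j) μ :=
      hvg'.comp ((measurable_pi_apply i).sub measurable_const)
        ((measurable_pi_apply j).sub measurable_const)
    have := hind.integral_mul_eq_mul_integral (hcv i).aestronglyMeasurable (hcg' j).aestronglyMeasurable
    simpa [Pi.mul_apply, hzv i, hzg' j] using this
  -- rewrite integrand
  have hint : (∫ ω, (e ω i - ∫ ω', e ω' i ∂μ) * (e' ω j - ∫ ω', e' ω' j ∂μ) ∂μ)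
      = ∫ ω, ((g ω i - mg i) * (g' ω j - mg' j) + (g ω i - mg i) * (v' ω j - mv' j) + ((v ω i - mv i) * (g' ω j - mg' j) + (v ω i - mv i) * (v' ω j - mv' j))) ∂μ := by
    apply integral_congr_ae
    filter_upwards with ω
    rw [hmeans i, hmeans' j]
    simp only [he, he', Pi.add_apply]
    ring
  rw [hint]
  have hA : Integrable (fun ω => (g ω i - mg i) * (g' ω j - mg' j)) μ :=
    int_mul_of_L2 (hcg i) (hcg' j)
  have hB : Integrable (fun ω => (g ω i - mg i) * (v' ω j - mv' j)) μ :=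
    int_mul_of_L2 (hcg i) (hcv' j)
  have hC : Integrable (fun ω => (v ω i - mv i) * (g' ω j - mg' j)) μ :=
    int_mul_of_L2 (hcv i) (hcg' j)
  have hD : Integrable (fun ω => (v ω i - mv i) * (v' ω j - mv' j)) μ :=
    int_mul_of_L2 (hcv i) (hcv' j)
  have hAB : Integrable (fun ω => (g ω i - mg i) * (g' ω j - mg' j) + (g ω i - mg i) * (v' ω j - mv' j)) μ := hA.add hB
  have hCD : Integrable (fun ω => (v ω i - mv i) * (g' ω j - mg' j) + (v ω i - mv i) * (v' ω j - mv' j)) μ := hC.add hD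
  rw [integral_add hAB hCD, integral_add hA hB, integral_add hC hD,
    hκg i j, hκv i j, hcross1, hcross2]
  have h2 : νe - 2 ≠ 0 := by linarith
  have h0 : νe ≠ 0 := by linarith
  simp only [hκe, Matrix.smul_apply, Matrix.add_apply, smul_eq_mul]
  field_simp
  ring
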